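/- The enhanced power graph of the alternating group A₉ contains an induced 7-cycle on the permutations (1 2 3 4 5), (7 8 9), (1 2)(3 4), (5 6 7), (1 2)(8 9), (3 4 5), (6 7)(8 9), and hence is not a perfect graph. -/

import Mathlib

def powerGraph (G : Type*) [Group G] : SimpleGraph G where
  Adj x y := x ≠ y ∧ ((∃ n : ℤ, n ≠ 0 ∧ y = x ^ n) ∨ ∃ n : ℤ, n ≠ 0 ∧ x = y ^ n)
  symm := ⟨fun _ _ ⟨h, h2⟩ => ⟨h.symm, h2.symm⟩⟩
  loopless := ⟨fun _ ⟨h, _⟩ => h rfl⟩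

def enhancedPowerGraph (G : Type*) [Group G] : SimpleGraph G where
  Adj x y := x ≠ y ∧ ∃ z : G, x ∈ Subgroup.zpowers z ∧ y ∈ Subgroup.zpowers z
  symm := ⟨fun _ _ ⟨h, z, hx, hy⟩ => ⟨h.symm, z, hy, hx⟩⟩
  loopless := ⟨fun _ ⟨h, _⟩ => h rfl⟩


def SimpleGraph.IsPerfect {V : Type*} (G : SimpleGraph V) : Prop :=
  ∀ s : Set V, (G.induce s).chromaticNumber = ((G.induce s).cliqueNum : ℕ∞)


section EPGAux
variable {G : Type*} [Group G]

lemma isCyclic_zpowers (z : G) : IsCyclic (Subgroup.zpowers z) := by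
  refine ⟨⟨z, Subgroup.mem_zpowers z⟩, ?_⟩
  rintro ⟨x, hx⟩
  obtain ⟨k, rfl⟩ := Subgroup.mem_zpowers_iff.mp hx
  exact ⟨k, Subtype.ext (by simp)⟩

lemma eq_of_invol [Finite G] {z x y : G} (hx : x ∈ Subgroup.zpowers z)
    (hy : y ∈ Subgroup.zpowers z) (hx2 : x ^ 2 = 1) (hy2 : y ^ 2 = 1)
    (hx1 : x ≠ 1) (hy1 : y ≠ 1) : x = y := by
  classical
  by_contra hxy
  haveI := Fintype.ofFinite (Subgroup.zpowers z)
  haveI := isCyclic_zpowers z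
  have hle := IsCyclic.card_pow_eq_one_le (α := Subgroup.zpowers z) (n := 2) (by norm_num)
  have hsub : ({1, ⟨x, hx⟩, ⟨y, hy⟩} : Finset (Subgroup.zpowers z)) ⊆
      ({b : Subgroup.zpowers z | b ^ 2 = 1} : Finset _) := by
    intro b hb
    simp only [Finset.mem_insert, Finset.mem_singleton] at hb
    rcases hb with rfl | rfl | rfl <;>
      simp_all [Finset.mem_filter, Subtype.ext_iff]
  have hcard : ({1, ⟨x, hx⟩, ⟨y, hy⟩} : Finset (Subgroup.zpowers z)).card = 3 := by
    rw [Finset.card_insert_of_notMem, Finset.card_insert_of_notMem, Finset.card_singleton]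
    · simp [Subtype.ext_iff, hxy]
    · simp [Subtype.ext_iff, Ne.symm hx1, Ne.symm hy1]
  have := (Finset.card_le_card hsub).trans hle
  omega

lemma mem_of_ord3 [Finite G] {z x y : G} (hx : x ∈ Subgroup.zpowers z)
    (hy : y ∈ Subgroup.zpowers z) (hx3 : x ^ 3 = 1) (hy3 : y ^ 3 = 1)
    (hx1 : x ≠ 1) : y = 1 ∨ y = x ∨ y = x ^ 2 := by
  classical
  by_contra hcon
  push_neg at hcon
  obtain ⟨h1, h2, h3⟩ := hcon
  haveI := Fintype.ofFinite (Subgroup.zpowers z)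
  haveI := isCyclic_zpowers z
  have hle := IsCyclic.card_pow_eq_one_le (α := Subgroup.zpowers z) (n := 3) (by norm_num)
  have hxx1 : x ^ 2 ≠ 1 := by
    intro h
    apply hx1
    calc x = x ^ 3 * (x ^ 2)⁻¹ := by group
    _ = 1 := by rw [hx3, h]; group
  have hxx2 : x ^ 2 ≠ x := by
    intro h
    exact hx1 (mul_left_cancel (a := x) (by rw [mul_one, ← pow_two, h]))
  have hsub : ({1, ⟨x, hx⟩, ⟨x ^ 2, pow_mem hx 2⟩, ⟨y, hy⟩} : Finset (Subgroup.zpowers z)) ⊆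
      ({b : Subgroup.zpowers z | b ^ 3 = 1} : Finset _) := by
    intro b hb
    simp only [Finset.mem_insert, Finset.mem_singleton] at hb
    have hx6 : (x ^ 2) ^ 3 = 1 := by rw [← pow_mul, show 2*3 = 3*2 from rfl, pow_mul, hx3]; group
    rcases hb with rfl | rfl | rfl | rfl <;>
      simp_all [Finset.mem_filter, Subtype.ext_iff]
  have hcard : ({1, ⟨x, hx⟩, ⟨x ^ 2, pow_mem hx 2⟩, ⟨y, hy⟩} : Finset (Subgroup.zpowers z)).card = 4 := by
    rw [Finset.card_insert_of_notMem, Finset.card_insert_of_notMem,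
      Finset.card_insert_of_notMem, Finset.card_singleton] <;>
      simp [Subtype.ext_iff, Ne.symm h1, Ne.symm h2, Ne.symm h3, Ne.symm hx1,
        Ne.symm hxx1, hxx2.symm]
  have := (Finset.card_le_card hsub).trans hle
  omega

lemma adj_helper {x y : G} (hne : x ≠ y) (a b : ℕ) (ha : (x * y) ^ a = x)
    (hb : (x * y) ^ b = y) : (enhancedPowerGraph G).Adj x y :=
  ⟨hne, x * y, Subgroup.mem_zpowers_iff.mpr ⟨(a : ℤ), by rw [zpow_natCast, ha]⟩,
    Subgroup.mem_zpowers_iff.mpr ⟨(b : ℤ), by rw [zpow_natCast, hb]⟩⟩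

lemma nonadj_of_noncomm {x y : G} (h : x * y ≠ y * x) :
    ¬(enhancedPowerGraph G).Adj x y := by
  rintro ⟨-, z, hx, hy⟩
  obtain ⟨a, rfl⟩ := Subgroup.mem_zpowers_iff.mp hx
  obtain ⟨b, rfl⟩ := Subgroup.mem_zpowers_iff.mp hy
  exact h (zpow_mul_comm z a b)

lemma nonadj_invol [Finite G] {x y : G} (hx2 : x ^ 2 = 1) (hy2 : y ^ 2 = 1)
    (hx1 : x ≠ 1) (hy1 : y ≠ 1) (hxy : x ≠ y) : ¬(enhancedPowerGraph G).Adj x y := by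
  rintro ⟨-, z, hx, hy⟩
  exact hxy (eq_of_invol hx hy hx2 hy2 hx1 hy1)

lemma nonadj_ord3 [Finite G] {x y : G} (hx3 : x ^ 3 = 1) (hy3 : y ^ 3 = 1)
    (hx1 : x ≠ 1) (hy1 : y ≠ 1) (h1 : y ≠ x) (h2 : y ≠ x ^ 2) :
    ¬(enhancedPowerGraph G).Adj x y := by
  rintro ⟨-, z, hx, hy⟩
  rcases mem_of_ord3 hx hy hx3 hy3 hx1 with h | h | h <;> contradiction

end EPGAux

private lemma tri_abstract {V : Type*} (Γ : SimpleGraph V) (x : Fin 7 → V)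
    (n13 : ¬Γ.Adj (x 0) (x 2))
    (n14 : ¬Γ.Adj (x 0) (x 3))
    (n15 : ¬Γ.Adj (x 0) (x 4))
    (n16 : ¬Γ.Adj (x 0) (x 5))
    (n24 : ¬Γ.Adj (x 1) (x 3))
    (n25 : ¬Γ.Adj (x 1) (x 4))
    (n26 : ¬Γ.Adj (x 1) (x 5))
    (n27 : ¬Γ.Adj (x 1) (x 6))
    (n35 : ¬Γ.Adj (x 2) (x 4))
    (n36 : ¬Γ.Adj (x 2) (x 5))
    (n37 : ¬Γ.Adj (x 2) (x 6))
    (n46 : ¬Γ.Adj (x 3) (x 5))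
    (n47 : ¬Γ.Adj (x 3) (x 6))
    (n57 : ¬Γ.Adj (x 4) (x 6)) :
    ∀ a b c : V,
      (a = x 0 ∨ a = x 1 ∨ a = x 2 ∨ a = x 3 ∨ a = x 4 ∨ a = x 5 ∨ a = x 6) →
      (b = x 0 ∨ b = x 1 ∨ b = x 2 ∨ b = x 3 ∨ b = x 4 ∨ b = x 5 ∨ b = x 6) →
      (c = x 0 ∨ c = x 1 ∨ c = x 2 ∨ c = x 3 ∨ c = x 4 ∨ c = x 5 ∨ c = x 6) →
      Γ.Adj a b → Γ.Adj a c → Γ.Adj b c → False := by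
  have n31 : ¬Γ.Adj (x 2) (x 0) := fun h => n13 h.symm
  have n41 : ¬Γ.Adj (x 3) (x 0) := fun h => n14 h.symm
  have n51 : ¬Γ.Adj (x 4) (x 0) := fun h => n15 h.symm
  have n61 : ¬Γ.Adj (x 5) (x 0) := fun h => n16 h.symm
  have n42 : ¬Γ.Adj (x 3) (x 1) := fun h => n24 h.symm
  have n52 : ¬Γ.Adj (x 4) (x 1) := fun h => n25 h.symm
  have n62 : ¬Γ.Adj (x 5) (x 1) := fun h => n26 h.symm
  have n72 : ¬Γ.Adj (x 6) (x 1) := fun h => n27 h.symm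
  have n53 : ¬Γ.Adj (x 4) (x 2) := fun h => n35 h.symm
  have n63 : ¬Γ.Adj (x 5) (x 2) := fun h => n36 h.symm
  have n73 : ¬Γ.Adj (x 6) (x 2) := fun h => n37 h.symm
  have n64 : ¬Γ.Adj (x 5) (x 3) := fun h => n46 h.symm
  have n74 : ¬Γ.Adj (x 6) (x 3) := fun h => n47 h.symm
  have n75 : ¬Γ.Adj (x 6) (x 4) := fun h => n57 h.symm
  have i1 : ¬Γ.Adj (x 0) (x 0) := Γ.irrefl
  have i2 : ¬Γ.Adj (x 1) (x 1) := Γ.irrefl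
  have i3 : ¬Γ.Adj (x 2) (x 2) := Γ.irrefl
  have i4 : ¬Γ.Adj (x 3) (x 3) := Γ.irrefl
  have i5 : ¬Γ.Adj (x 4) (x 4) := Γ.irrefl
  have i6 : ¬Γ.Adj (x 5) (x 5) := Γ.irrefl
  have i7 : ¬Γ.Adj (x 6) (x 6) := Γ.irrefl
  intro a b c ha hb hc hab hac hbc
  rcases ha with rfl | rfl | rfl | rfl | rfl | rfl | rfl <;>
    rcases hb with rfl | rfl | rfl | rfl | rfl | rfl | rfl <;>
      rcases hc with rfl | rfl | rfl | rfl | rfl | rfl | rfl <;>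
        contradiction

set_option maxRecDepth 40000

section A9Heptagon
open Equiv

private def u₁ : alternatingGroup (Fin 9) :=
  ⟨c[0, 1, 2, 3, 4], by rw [Equiv.Perm.mem_alternatingGroup]; decide⟩
private def u₂ : alternatingGroup (Fin 9) :=
  ⟨c[6, 7, 8], by rw [Equiv.Perm.mem_alternatingGroup]; decide⟩
private def u₃ : alternatingGroup (Fin 9) :=
  ⟨c[0, 1] * c[2, 3], by rw [Equiv.Perm.mem_alternatingGroup]; decide⟩
private def u₄ : alternatingGroup (Fin 9) :=
  ⟨c[4, 5, 6], by rw [Equiv.Perm.mem_alternatingGroup]; decide⟩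
private def u₅ : alternatingGroup (Fin 9) :=
  ⟨c[0, 1] * c[7, 8], by rw [Equiv.Perm.mem_alternatingGroup]; decide⟩
private def u₆ : alternatingGroup (Fin 9) :=
  ⟨c[2, 3, 4], by rw [Equiv.Perm.mem_alternatingGroup]; decide⟩
private def u₇ : alternatingGroup (Fin 9) :=
  ⟨c[5, 6] * c[7, 8], by rw [Equiv.Perm.mem_alternatingGroup]; decide⟩

private abbrev Γ' : SimpleGraph (alternatingGroup (Fin 9)) :=
  enhancedPowerGraph (alternatingGroup (Fin 9))

private lemma ne_of_val {x y : alternatingGroup (Fin 9)} (h : (x : Perm (Fin 9)) ≠ y) :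
    x ≠ y := fun hh => h (congrArg Subtype.val hh)

private lemma pow_val (x : alternatingGroup (Fin 9)) (n : ℕ) :
    ((x ^ n : alternatingGroup (Fin 9)) : Perm (Fin 9)) = (x : Perm (Fin 9)) ^ n :=
  SubmonoidClass.coe_pow x n

private lemma eq_of_valeq {x y : alternatingGroup (Fin 9)}
    (h : (x : Perm (Fin 9)) = y) : x = y := Subtype.ext h

private lemma sub_pow_eq {x y : alternatingGroup (Fin 9)} (n : ℕ)
    (h : ((x : Perm (Fin 9)) * y) ^ n = (x : Perm (Fin 9))) : (x * y) ^ n = x := by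
  apply Subtype.ext
  rw [pow_val]
  exact h

private lemma adj12 : Γ'.Adj u₁ u₂ := by
  apply adj_helper
  · exact ne_of_val (by decide)
  · exact sub_pow_eq 6 (by decide)
  · apply Subtype.ext
    rw [pow_val]
    exact (by decide : ((c[0, 1, 2, 3, 4] : Perm (Fin 9)) * c[6, 7, 8]) ^ 10 = (c[6, 7, 8] : Perm (Fin 9)))

private lemma adj23 : Γ'.Adj u₂ u₃ := by
  apply adj_helper
  · exact ne_of_val (by decide)
  · exact sub_pow_eq 4 (by decide)
  · apply Subtype.ext
    rw [pow_val]
    exact (by decide : ((c[6, 7, 8] : Perm (Fin 9)) * c[0, 1] * c[2, 3]) ^ 3 = (c[0, 1] * c[2, 3] : Perm (Fin 9)))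

private lemma adj34 : Γ'.Adj u₃ u₄ := by
  apply adj_helper
  · exact ne_of_val (by decide)
  · exact sub_pow_eq 3 (by decide)
  · apply Subtype.ext
    rw [pow_val]
    exact (by decide : ((c[0, 1] * c[2, 3] : Perm (Fin 9)) * c[4, 5, 6]) ^ 4 = (c[4, 5, 6] : Perm (Fin 9)))

private lemma adj45 : Γ'.Adj u₄ u₅ := by
  apply adj_helper
  · exact ne_of_val (by decide)
  · exact sub_pow_eq 4 (by decide)
  · apply Subtype.ext
    rw [pow_val]
    exact (by decide : ((c[4, 5, 6] : Perm (Fin 9)) * c[0, 1] * c[7, 8]) ^ 3 = (c[0, 1] * c[7, 8] : Perm (Fin 9)))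

private lemma adj56 : Γ'.Adj u₅ u₆ := by
  apply adj_helper
  · exact ne_of_val (by decide)
  · exact sub_pow_eq 3 (by decide)
  · apply Subtype.ext
    rw [pow_val]
    exact (by decide : ((c[0, 1] * c[7, 8] : Perm (Fin 9)) * c[2, 3, 4]) ^ 4 = (c[2, 3, 4] : Perm (Fin 9)))

private lemma adj67 : Γ'.Adj u₆ u₇ := by
  apply adj_helper
  · exact ne_of_val (by decide)
  · exact sub_pow_eq 4 (by decide)
  · apply Subtype.ext
    rw [pow_val]
    exact (by decide : ((c[2, 3, 4] : Perm (Fin 9)) * c[5, 6] * c[7, 8]) ^ 3 = (c[5, 6] * c[7, 8] : Perm (Fin 9)))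

private lemma adj71 : Γ'.Adj u₇ u₁ := by
  apply adj_helper
  · exact ne_of_val (by decide)
  · exact sub_pow_eq 5 (by decide)
  · apply Subtype.ext
    rw [pow_val]
    exact (by decide : ((c[5, 6] * c[7, 8] : Perm (Fin 9)) * c[0, 1, 2, 3, 4]) ^ 6 = (c[0, 1, 2, 3, 4] : Perm (Fin 9)))

private lemma non13 : ¬ Γ'.Adj u₁ u₃ := by
  apply nonadj_of_noncomm
  intro h
  exact absurd (congrArg Subtype.val h) (by decide)

private lemma non14 : ¬ Γ'.Adj u₁ u₄ := by
  apply nonadj_of_noncomm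
  intro h
  exact absurd (congrArg Subtype.val h) (by decide)

private lemma non15 : ¬ Γ'.Adj u₁ u₅ := by
  apply nonadj_of_noncomm
  intro h
  exact absurd (congrArg Subtype.val h) (by decide)

private lemma non16 : ¬ Γ'.Adj u₁ u₆ := by
  apply nonadj_of_noncomm
  intro h
  exact absurd (congrArg Subtype.val h) (by decide)

private lemma non24 : ¬ Γ'.Adj u₂ u₄ := by
  apply nonadj_of_noncomm
  intro h
  exact absurd (congrArg Subtype.val h) (by decide)

private lemma non25 : ¬ Γ'.Adj u₂ u₅ := by
  apply nonadj_of_noncomm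
  intro h
  exact absurd (congrArg Subtype.val h) (by decide)

private lemma non27 : ¬ Γ'.Adj u₂ u₇ := by
  apply nonadj_of_noncomm
  intro h
  exact absurd (congrArg Subtype.val h) (by decide)

private lemma non36 : ¬ Γ'.Adj u₃ u₆ := by
  apply nonadj_of_noncomm
  intro h
  exact absurd (congrArg Subtype.val h) (by decide)

private lemma non46 : ¬ Γ'.Adj u₄ u₆ := by
  apply nonadj_of_noncomm
  intro h
  exact absurd (congrArg Subtype.val h) (by decide)

private lemma non47 : ¬ Γ'.Adj u₄ u₇ := by
  apply nonadj_of_noncomm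
  intro h
  exact absurd (congrArg Subtype.val h) (by decide)

private lemma non35 : ¬ Γ'.Adj u₃ u₅ := by
  apply nonadj_invol
  · exact eq_of_valeq (by decide)
  · exact eq_of_valeq (by decide)
  · exact ne_of_val (by decide)
  · exact ne_of_val (by decide)
  · exact ne_of_val (by decide)

private lemma non37 : ¬ Γ'.Adj u₃ u₇ := by
  apply nonadj_invol
  · exact eq_of_valeq (by decide)
  · exact eq_of_valeq (by decide)
  · exact ne_of_val (by decide)
  · exact ne_of_val (by decide)
  · exact ne_of_val (by decide)

private lemma non57 : ¬ Γ'.Adj u₅ u₇ := by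
  apply nonadj_invol
  · exact eq_of_valeq (by decide)
  · exact eq_of_valeq (by decide)
  · exact ne_of_val (by decide)
  · exact ne_of_val (by decide)
  · exact ne_of_val (by decide)

private lemma non26 : ¬ Γ'.Adj u₂ u₆ := by
  apply nonadj_ord3
  · exact eq_of_valeq (by decide)
  · exact eq_of_valeq (by decide)
  · exact ne_of_val (by decide)
  · exact ne_of_val (by decide)
  · exact ne_of_val (by decide)
  · exact ne_of_val (by rw [pow_val]; decide)

end A9Heptagon

open Equiv in
/-- The even permutations `(1 2 3 4 5), (7 8 9), (1 2)(3 4), (5 6 7), (1 2)(8 9),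
(3 4 5), (6 7)(8 9)` (written here with `0`-indexed points) induce a heptagon in the
enhanced power graph of `A₉`, which is therefore not perfect. -/
theorem enhanced_A9_not_perfect :
    (let Γ := enhancedPowerGraph (alternatingGroup (Fin 9))
     ∃ v₁ v₂ v₃ v₄ v₅ v₆ v₇ : alternatingGroup (Fin 9),
       (v₁ : Equiv.Perm (Fin 9)) = c[0, 1, 2, 3, 4] ∧
       (v₂ : Equiv.Perm (Fin 9)) = c[6, 7, 8] ∧
       (v₃ : Equiv.Perm (Fin 9)) = c[0, 1] * c[2, 3] ∧
       (v₄ : Equiv.Perm (Fin 9)) = c[4, 5, 6] ∧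
       (v₅ : Equiv.Perm (Fin 9)) = c[0, 1] * c[7, 8] ∧
       (v₆ : Equiv.Perm (Fin 9)) = c[2, 3, 4] ∧
       (v₇ : Equiv.Perm (Fin 9)) = c[5, 6] * c[7, 8] ∧
       Γ.Adj v₁ v₂ ∧ Γ.Adj v₂ v₃ ∧ Γ.Adj v₃ v₄ ∧ Γ.Adj v₄ v₅ ∧ Γ.Adj v₅ v₆ ∧
       Γ.Adj v₆ v₇ ∧ Γ.Adj v₇ v₁ ∧
       ¬Γ.Adj v₁ v₃ ∧ ¬Γ.Adj v₁ v₄ ∧ ¬Γ.Adj v₁ v₅ ∧ ¬Γ.Adj v₁ v₆ ∧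
       ¬Γ.Adj v₂ v₄ ∧ ¬Γ.Adj v₂ v₅ ∧ ¬Γ.Adj v₂ v₆ ∧ ¬Γ.Adj v₂ v₇ ∧
       ¬Γ.Adj v₃ v₅ ∧ ¬Γ.Adj v₃ v₆ ∧ ¬Γ.Adj v₃ v₇ ∧
       ¬Γ.Adj v₄ v₆ ∧ ¬Γ.Adj v₄ v₇ ∧ ¬Γ.Adj v₅ v₇) ∧
    ¬ (enhancedPowerGraph (alternatingGroup (Fin 9))).IsPerfect := by
  
  constructor
  · exact ⟨u₁, u₂, u₃, u₄, u₅, u₆, u₇, rfl, rfl, rfl, rfl, rfl, rfl, rfl,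
      adj12, adj23, adj34, adj45, adj56, adj67, adj71,
      non13, non14, non15, non16, non24, non25, non26, non27,
      non35, non36, non37, non46, non47, non57⟩
  · intro hperf
    set s : Set (alternatingGroup (Fin 9)) := {u₁, u₂, u₃, u₄, u₅, u₆, u₇} with hs
    have h := hperf s
    have tri : ∀ a b c : alternatingGroup (Fin 9), a ∈ s → b ∈ s → c ∈ s →
        Γ'.Adj a b → Γ'.Adj a c → Γ'.Adj b c → False := by
      intro a b c ha hb hc
      simp only [hs, Set.mem_insert_iff, Set.mem_singleton_iff] at ha hb hc
      exact tri_abstract Γ' ![u₁, u₂, u₃, u₄, u₅, u₆, u₇]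
        non13 non14 non15 non16 non24 non25 non26 non27
        non35 non36 non37 non46 non47 non57 a b c ha hb hc
    have hclique : (Γ'.induce s).cliqueNum ≤ 2 := by
      unfold SimpleGraph.cliqueNum
      have hne : {n | ∃ t : Finset s, (Γ'.induce s).IsNClique n t}.Nonempty :=
        ⟨0, ∅, SimpleGraph.isNClique_empty.mpr rfl⟩
      apply csSup_le hne
      rintro n ⟨t, ht⟩
      by_contra hn
      push_neg at hn
      obtain ⟨u, hu, hu3⟩ := Finset.exists_subset_card_eq (ht.card_eq ▸ hn)
      obtain ⟨a, b, c, hab, hac, hbc, rfl⟩ := Finset.card_eq_three.mp hu3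
      have hcl := ht.isClique.subset hu
      have Hab : (Γ'.induce s).Adj a b := hcl (Finset.mem_coe.mpr (by simp)) (Finset.mem_coe.mpr (by simp)) hab
      have Hac : (Γ'.induce s).Adj a c := hcl (Finset.mem_coe.mpr (by simp)) (Finset.mem_coe.mpr (by simp)) hac
      have Hbc : (Γ'.induce s).Adj b c := hcl (Finset.mem_coe.mpr (by simp)) (Finset.mem_coe.mpr (by simp)) hbc
      exact tri a.1 b.1 c.1 a.2 b.2 c.2 Hab Hac Hbc
    have hch : (Γ'.induce s).chromaticNumber ≤ (2 : ℕ) := by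
      rw [h]
      exact_mod_cast Nat.cast_le.mpr hclique
    have hcol : (Γ'.induce s).Colorable 2 :=
      SimpleGraph.chromaticNumber_le_iff_colorable.mp hch
    obtain ⟨C⟩ := hcol
    have m1 : u₁ ∈ s := by simp [hs]
    have m2 : u₂ ∈ s := by simp [hs]
    have m3 : u₃ ∈ s := by simp [hs]
    have m4 : u₄ ∈ s := by simp [hs]
    have m5 : u₅ ∈ s := by simp [hs]
    have m6 : u₆ ∈ s := by simp [hs]
    have m7 : u₇ ∈ s := by simp [hs]
    have e12 : C ⟨u₁, m1⟩ ≠ C ⟨u₂, m2⟩ := C.valid adj12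
    have e23 : C ⟨u₂, m2⟩ ≠ C ⟨u₃, m3⟩ := C.valid adj23
    have e34 : C ⟨u₃, m3⟩ ≠ C ⟨u₄, m4⟩ := C.valid adj34
    have e45 : C ⟨u₄, m4⟩ ≠ C ⟨u₅, m5⟩ := C.valid adj45
    have e56 : C ⟨u₅, m5⟩ ≠ C ⟨u₆, m6⟩ := C.valid adj56
    have e67 : C ⟨u₆, m6⟩ ≠ C ⟨u₇, m7⟩ := C.valid adj67
    have e71 : C ⟨u₇, m7⟩ ≠ C ⟨u₁, m1⟩ := C.valid adj71
    have d12 : (C ⟨u₁, m1⟩).val ≠ (C ⟨u₂, m2⟩).val := fun hh => e12 (Fin.val_injective hh)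
    have d23 : (C ⟨u₂, m2⟩).val ≠ (C ⟨u₃, m3⟩).val := fun hh => e23 (Fin.val_injective hh)
    have d34 : (C ⟨u₃, m3⟩).val ≠ (C ⟨u₄, m4⟩).val := fun hh => e34 (Fin.val_injective hh)
    have d45 : (C ⟨u₄, m4⟩).val ≠ (C ⟨u₅, m5⟩).val := fun hh => e45 (Fin.val_injective hh)
    have d56 : (C ⟨u₅, m5⟩).val ≠ (C ⟨u₆, m6⟩).val := fun hh => e56 (Fin.val_injective hh)
    have d67 : (C ⟨u₆, m6⟩).val ≠ (C ⟨u₇, m7⟩).val := fun hh => e67 (Fin.val_injective hh)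
    have d71 : (C ⟨u₇, m7⟩).val ≠ (C ⟨u₁, m1⟩).val := fun hh => e71 (Fin.val_injective hh)
    have l1 : (C ⟨u₁, m1⟩).val < 2 := (C ⟨u₁, m1⟩).isLt
    have l2 : (C ⟨u₂, m2⟩).val < 2 := (C ⟨u₂, m2⟩).isLt
    have l3 : (C ⟨u₃, m3⟩).val < 2 := (C ⟨u₃, m3⟩).isLt
    have l4 : (C ⟨u₄, m4⟩).val < 2 := (C ⟨u₄, m4⟩).isLt
    have l5 : (C ⟨u₅, m5⟩).val < 2 := (C ⟨u₅, m5⟩).isLt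
    have l6 : (C ⟨u₆, m6⟩).val < 2 := (C ⟨u₆, m6⟩).isLt
    have l7 : (C ⟨u₇, m7⟩).val < 2 := (C ⟨u₇, m7⟩).isLt
    omega
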